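/- Let D be a bipartite tournament with bipartition (V_1,V_2), \zeta(D) >= 1, sink sequence (W_0,...,W_{\zeta(D)}), and suppose W_j \subset V_2 for even j. Then for each k' = 0,...,floor(\zeta(D)/2)-1, every vertex of W_{2k'+1} is an out-neighbor in D of every vertex of V_2 \setminus (W_0 \cup ... \cup W_{2k'}). -/

import Mathlib

/-- `walkN D n u v` : there is a directed walk of length `n` from `u` to `v` in the digraph `D`. -/
def walkN {V : Type*} (D : V → V → Prop) : ℕ → V → V → Prop
  | 0 => fun u v => u = v
  | n+1 => fun u v => ∃ w, D u w ∧ walkN D n w v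

/-- The `m`-step competition graph of the digraph `D`. -/
def cmGraph {V : Type*} (D : V → V → Prop) (m : ℕ) : SimpleGraph V where
  Adj u v := u ≠ v ∧ ∃ z, walkN D m u z ∧ walkN D m v z
  symm := by
    constructor
    intro u v h
    exact ⟨Ne.symm h.1, h.2.imp fun z hz => ⟨hz.2, hz.1⟩⟩
  loopless := by constructor; intro v h; exact h.1 rfl

/-- Sinks of the subdigraph of `D` induced by `S`. -/
def sinks {V : Type*} (D : V → V → Prop) (S : Set V) : Set V :=
  {v ∈ S | ∀ w ∈ S, ¬ D v w}

/-- The digraph sequence `D_0, D_1, …` (as vertex sets) associated with the sink sequence. -/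
def Dseq {V : Type*} (D : V → V → Prop) : ℕ → Set V
  | 0 => Set.univ
  | n+1 => Dseq D n \ sinks D (Dseq D n)

/-- The sink sequence `W_0, W_1, …` of `D`. -/
def Wseq {V : Type*} (D : V → V → Prop) (n : ℕ) : Set V := sinks D (Dseq D n)

/-- `k` is the sink elimination index `ζ(D)`. -/
def IsSinkElimIndex {V : Type*} (D : V → V → Prop) (k : ℕ) : Prop :=
  (Wseq D k = Dseq D k ∨ Wseq D k = ∅) ∧
  ∀ j < k, Wseq D j ≠ Dseq D j ∧ Wseq D j ≠ ∅

/-- A digraph is acyclic iff it has no directed closed walk of positive length. -/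
def DigraphAcyclic {V : Type*} (D : V → V → Prop) : Prop :=
  ∀ v : V, ∀ n : ℕ, 0 < n → ¬ walkN D n v v

/-- `D` is a bipartite tournament with bipartition `(V1, V2)`. -/
structure IsBipartiteTournament {V : Type*} (D : V → V → Prop) (V1 V2 : Set V) : Prop where
  nonempty1 : V1.Nonempty
  nonempty2 : V2.Nonempty
  union_eq : V1 ∪ V2 = Set.univ
  disj : V1 ∩ V2 = ∅
  oriented : ∀ x ∈ V1, ∀ y ∈ V2, Xor' (D x y) (D y x)
  no_intra : ∀ x y, D x y → (x ∈ V1 ∧ y ∈ V2) ∨ (x ∈ V2 ∧ y ∈ V1)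

/-- The competition graph sequence of `D` is eventually equal, starting from `q`. -/
def PeriodicFrom {V : Type*} (D : V → V → Prop) (q : ℕ) : Prop :=
  ∃ r, 0 < r ∧ ∀ i : ℕ, cmGraph D (q + i) = cmGraph D (q + r + i)

/-- `q` is the competition index of `D`. -/
def IsCindex {V : Type*} (D : V → V → Prop) (q : ℕ) : Prop :=
  0 < q ∧ PeriodicFrom D q ∧ ∀ q', 0 < q' → PeriodicFrom D q' → q ≤ q'

/-- `p` is the competition period of `D`, given that `q` is its competition index. -/
def IsCperiod {V : Type*} (D : V → V → Prop) (q p : ℕ) : Prop :=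
  0 < p ∧ cmGraph D q = cmGraph D (q + p) ∧
    ∀ p', 0 < p' → cmGraph D q = cmGraph D (q + p') → p ≤ p'


lemma mem_Dseq_iff {V : Type*} (D : V → V → Prop) (n : ℕ) (v : V) :
    v ∈ Dseq D n ↔ ∀ i < n, v ∉ Wseq D i := by
  induction n with
  | zero => simp [Dseq]
  | succ n ih =>
    show v ∈ Dseq D n \ Wseq D n ↔ _
    rw [Set.mem_diff, ih]
    constructor
    · rintro ⟨h1, h2⟩ i hi
      rcases Nat.lt_succ_iff_lt_or_eq.mp hi with h | rfl
      · exact h1 i h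
      · exact h2
    · intro h
      exact ⟨fun i hi => h i (hi.trans n.lt_succ_self), h n n.lt_succ_self⟩

/-- In a bipartite tournament with `ζ(D) ≥ 1` in which `W_j ⊆ V2` for even `j`,
for each `k' = 0, …, ⌊ζ(D)/2⌋ - 1`, every vertex of `W_{2k'+1}` is an out-neighbor of
every vertex of `V2 \ (W_0 ∪ ⋯ ∪ W_{2k'})`. -/
theorem odd_sink_set_outneighbor {V : Type*} [Fintype V] (D : V → V → Prop)
    (V1 V2 : Set V) (hD : IsBipartiteTournament D V1 V2)
    (k : ℕ) (hk : IsSinkElimIndex D k) (hk1 : 1 ≤ k)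
    (heven : ∀ j ≤ k, Even j → Wseq D j ⊆ V2) :
    ∀ k' : ℕ, 2 * k' + 2 ≤ k →
      ∀ w ∈ Wseq D (2 * k' + 1),
        ∀ v ∈ V2 \ (⋃ i ∈ Finset.range (2 * k' + 1), Wseq D i), D v w := by
  intro k' hk' w hw v hv
  obtain ⟨hv2, hvnot⟩ := hv
  have hdisj : ∀ x, x ∈ V1 → x ∈ V2 → False := fun x h1 h2 =>
    Set.eq_empty_iff_forall_notMem.mp hD.disj x ⟨h1, h2⟩
  have hnoV2 : ∀ x y, x ∈ V2 → y ∈ V2 → ¬ D x y := by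
    intro x y hx hy hxy
    rcases hD.no_intra x y hxy with ⟨h1, _⟩ | ⟨_, h2⟩
    · exact hdisj x h1 hx
    · exact hdisj y h2 hy
  have hvD : v ∈ Dseq D (2 * k' + 1) := by
    rw [mem_Dseq_iff]
    intro i hi hmem
    exact hvnot (Set.mem_biUnion (Finset.mem_range.mpr hi) hmem)
  obtain ⟨hwD, hws⟩ := hw
  have hW2k' : Wseq D (2 * k') ⊆ V2 := heven (2 * k') (by omega) ⟨k', by ring⟩
  have hwD2 : w ∈ Dseq D (2 * k') ∧ w ∉ Wseq D (2 * k') := hwD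
  have hwV1 : w ∈ V1 := by
    by_contra hwn
    have hwV2 : w ∈ V2 := by
      have hu : w ∈ V1 ∪ V2 := hD.union_eq ▸ Set.mem_univ w
      rcases hu with h | h
      · exact absurd h hwn
      · exact h
    refine hwD2.2 ⟨hwD2.1, fun u hu => ?_⟩
    by_cases hu2 : u ∈ Wseq D (2 * k')
    · exact hnoV2 w u hwV2 (hW2k' hu2)
    · exact hws u ⟨hu, hu2⟩
  have hnwv : ¬ D w v := hws v hvD
  rcases hD.oriented w hwV1 v hv2 with ⟨h, _⟩ | ⟨h, _⟩
  · exact absurd h hnwv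
  · exact h
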